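/- Let $H : \mathbb{R}^\ell \times \mathbb{R}^m \to \mathbb{R}$ be differentiable in $a$ with strong convexity $H(x,a) - H(x,a') - (a-a')\cdot \partial_a H(x,a) \ge \gamma|a-a'|^2$ for some $\gamma>0$, and suppose $|\partial_a H(x,a)| \le C(1+|x|)$ whenever $a$ lies on the segment between $0$ and any minimizer. If $\alpha \in \mathbb{R}^m$ satisfies $\partial_a H(x,\alpha) = 0$ and $|\partial_a H(x, u\alpha)| \le C(1+|x|)$ for all $u \in [0,1]$, then $|\alpha| \le \frac{2C}{\gamma}(1+|x|)$. -/

import Mathlib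

/-- Linear growth of the minimizer of a strongly convex Hamiltonian:
if `H(x,·)` is `γ`-strongly convex, `α` is a critical point of `H(x,·)` and
`‖∂ₐH(x, uα)‖ ≤ C(1+‖x‖)` for `u ∈ [0,1]`, then `‖α‖ ≤ (2C/γ)(1+‖x‖)`. -/
theorem minimizer_linear_growth_of_strongly_convex {ℓ m : ℕ}
    (H : EuclideanSpace ℝ (Fin ℓ) → EuclideanSpace ℝ (Fin m) → ℝ)
    (DaH : EuclideanSpace ℝ (Fin ℓ) → EuclideanSpace ℝ (Fin m) → EuclideanSpace ℝ (Fin m))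
    (hgrad : ∀ x a, HasGradientAt (H x) (DaH x a) a)
    (γ C : ℝ) (hγ : 0 < γ)
    (hsc : ∀ x a a', γ * ‖a - a'‖ ^ 2 ≤ H x a - H x a' - (inner ℝ (a - a') (DaH x a) : ℝ))
    (x : EuclideanSpace ℝ (Fin ℓ)) (α : EuclideanSpace ℝ (Fin m))
    (hfoc : DaH x α = 0)
    (hgrowth : ∀ u : ℝ, u ∈ Set.Icc (0 : ℝ) 1 → ‖DaH x (u • α)‖ ≤ C * (1 + ‖x‖)) :
    ‖α‖ ≤ 2 * C / γ * (1 + ‖x‖) := by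
  have h0 : ‖DaH x 0‖ ≤ C * (1 + ‖x‖) := by
    have := hgrowth 0 ⟨le_refl 0, zero_le_one⟩
    simpa using this
  have hK : 0 ≤ C * (1 + ‖x‖) := le_trans (norm_nonneg _) h0
  have h1 := hsc x α 0
  have h2 := hsc x 0 α
  rw [hfoc] at h1
  simp only [sub_zero, inner_zero_right] at h1
  rw [zero_sub, norm_neg, inner_neg_left] at h2
  have hcs : (inner ℝ α (DaH x 0) : ℝ) ≤ ‖α‖ * (C * (1 + ‖x‖)) := by
    calc (inner ℝ α (DaH x 0) : ℝ) ≤ ‖α‖ * ‖DaH x 0‖ := real_inner_le_norm _ _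
    _ ≤ ‖α‖ * (C * (1 + ‖x‖)) := by
        exact mul_le_mul_of_nonneg_left h0 (norm_nonneg _)
  have key : 2 * γ * ‖α‖ ^ 2 ≤ ‖α‖ * (C * (1 + ‖x‖)) := by nlinarith [h1, h2, hcs]
  rw [div_mul_eq_mul_div, le_div_iff₀ hγ]
  nlinarith [key, norm_nonneg α, hK, mul_nonneg (norm_nonneg α) hK]
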